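/- Fix n ≥ 1 and finite p, p' > 0. The following are equivalent: (1) for every Hermitian n×n complex matrix A there exist finitely many Hermitian n×n matrices B_1, …, B_r such that |A ⊗ₖ 1 − 1 ⊗ₖ Aᵀ|^p = Σ_{k=1}^r |B_k ⊗ₖ 1 − 1 ⊗ₖ B_kᵀ|^{p'}; (2) for every Hermitian n×n complex matrix A that is not a real scalar multiple of the identity, there exist finitely many Hermitian n×n matrices B_1, …, B_r and a Hermitian n×n matrix A' whose spectrum has strictly smaller cardinality than the spectrum of A, such that |A ⊗ₖ 1 − 1 ⊗ₖ Aᵀ|^p − Σ_{k=1}^r |B_k ⊗ₖ 1 − 1 ⊗ₖ B_kᵀ|^{p'} = |A' ⊗ₖ 1 − 1 ⊗ₖ A'ᵀ|^p. -/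

import Mathlib

open Kronecker Matrix
open scoped ComplexOrder

/-- `costOp p A` is the cost operator `|A ⊗ₖ 1 - 1 ⊗ₖ Aᵀ|^p`, where `|·|^p` is the
functional calculus applied with `x ↦ |x| ^ p` (real rpow). -/
noncomputable def costOp {n : ℕ} (p : ℝ) (A : Matrix (Fin n) (Fin n) ℂ) :
    Matrix (Fin n × Fin n) (Fin n × Fin n) ℂ :=
  cfc (fun x : ℝ => |x| ^ p)
    (A ⊗ₖ (1 : Matrix (Fin n) (Fin n) ℂ) - (1 : Matrix (Fin n) (Fin n) ℂ) ⊗ₖ Aᵀ)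

lemma costOp_scalar {n : ℕ} (p : ℝ) (hp : 0 < p) (c : ℝ) :
    costOp p (c • (1 : Matrix (Fin n) (Fin n) ℂ)) = 0 := by
  have h0 : (c • (1 : Matrix (Fin n) (Fin n) ℂ)) ⊗ₖ (1 : Matrix (Fin n) (Fin n) ℂ)
      - (1 : Matrix (Fin n) (Fin n) ℂ) ⊗ₖ (c • (1 : Matrix (Fin n) (Fin n) ℂ))ᵀ = 0 := by
    rw [Matrix.transpose_smul, Matrix.transpose_one, Matrix.smul_kronecker,
      Matrix.kronecker_smul, sub_self]
  rw [costOp, h0, cfc_apply_zero]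
  simp [abs_zero, Real.zero_rpow hp.ne']

lemma herm_scalar {n : ℕ} (hn : 1 ≤ n) {A : Matrix (Fin n) (Fin n) ℂ} (hA : A.IsHermitian)
    (h : ∀ i j, hA.eigenvalues i = hA.eigenvalues j) :
    ∃ c : ℝ, A = c • (1 : Matrix (Fin n) (Fin n) ℂ) := by
  have i0 : Fin n := ⟨0, hn⟩
  refine ⟨hA.eigenvalues i0, ?_⟩
  have hd : Matrix.diagonal (RCLike.ofReal ∘ hA.eigenvalues) =
      (hA.eigenvalues i0 : ℝ) • (1 : Matrix (Fin n) (Fin n) ℂ) := by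
    ext i j
    by_cases hij : i = j
    · subst hij; simp [Matrix.diagonal, h i i0, Complex.real_smul]
    · simp [Matrix.diagonal_apply_ne _ hij, Matrix.one_apply_ne hij]
  calc A = _ := hA.spectral_theorem
  _ = (hA.eigenvalues i0 : ℝ) • (1 : Matrix (Fin n) (Fin n) ℂ) := by
    rw [hd, Unitary.conjStarAlgAut_apply, Matrix.mul_smul, Matrix.smul_mul, mul_one,
      Matrix.mem_unitaryGroup_iff.mp (Matrix.IsHermitian.eigenvectorUnitary hA).2]

lemma one_lt_ncard_spectrum {n : ℕ} (hn : 1 ≤ n) {A : Matrix (Fin n) (Fin n) ℂ}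
    (hA : A.IsHermitian) (h : ¬ ∃ c : ℝ, A = c • (1 : Matrix (Fin n) (Fin n) ℂ)) :
    1 < (spectrum ℝ A).ncard := by
  obtain ⟨i, j, hij⟩ : ∃ i j, hA.eigenvalues i ≠ hA.eigenvalues j := by
    by_contra h'
    push_neg at h'
    exact h (herm_scalar hn hA h')
  exact (Set.one_lt_ncard_iff A.finite_real_spectrum).mpr
    ⟨_, _, hA.eigenvalues_mem_spectrum_real i, hA.eigenvalues_mem_spectrum_real j, hij⟩

/-- Decomposability of all `p`-cost operators into `p'`-cost operators is equivalent to the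
possibility of a spectral-reduction step for every non-scalar Hermitian matrix. -/
theorem cost_decomposition_iff_spectral_reduction {n : ℕ} (hn : 1 ≤ n) (p p' : ℝ)
    (hp : 0 < p) (hp' : 0 < p') :
    (∀ A : Matrix (Fin n) (Fin n) ℂ, A.IsHermitian →
      ∃ (r : ℕ) (B : Fin r → Matrix (Fin n) (Fin n) ℂ),
        (∀ k, (B k).IsHermitian) ∧ costOp p A = ∑ k, costOp p' (B k)) ↔
    (∀ A : Matrix (Fin n) (Fin n) ℂ, A.IsHermitian →
      (¬ ∃ c : ℝ, A = c • (1 : Matrix (Fin n) (Fin n) ℂ)) →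
      ∃ (r : ℕ) (B : Fin r → Matrix (Fin n) (Fin n) ℂ)
        (A' : Matrix (Fin n) (Fin n) ℂ),
        (∀ k, (B k).IsHermitian) ∧ A'.IsHermitian ∧
        (spectrum ℝ A').ncard < (spectrum ℝ A).ncard ∧
        costOp p A - ∑ k, costOp p' (B k) = costOp p A') := by
  haveI : NeZero n := ⟨by omega⟩
  constructor
  · intro h1 A hA hns
    obtain ⟨r, B, hB, heq⟩ := h1 A hA
    refine ⟨r, B, 0, hB, Matrix.isHermitian_zero, ?_, ?_⟩
    · have h0 : (spectrum ℝ (0 : Matrix (Fin n) (Fin n) ℂ)).ncard = 1 := by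
        rw [spectrum.zero_eq, Set.ncard_singleton]
      rw [h0]
      exact one_lt_ncard_spectrum hn hA hns
    · rw [heq, sub_self]
      have : (0 : Matrix (Fin n) (Fin n) ℂ) = (0 : ℝ) • (1 : Matrix (Fin n) (Fin n) ℂ) := by
        simp
      rw [this, costOp_scalar p hp]
  · intro h2
    suffices H : ∀ m, ∀ A : Matrix (Fin n) (Fin n) ℂ, A.IsHermitian →
        (spectrum ℝ A).ncard ≤ m →
        ∃ (r : ℕ) (B : Fin r → Matrix (Fin n) (Fin n) ℂ),
          (∀ k, (B k).IsHermitian) ∧ costOp p A = ∑ k, costOp p' (B k) by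
      exact fun A hA => H _ A hA le_rfl
    intro m
    induction m with
    | zero =>
      intro A hA hcard
      by_cases hs : ∃ c : ℝ, A = c • (1 : Matrix (Fin n) (Fin n) ℂ)
      · obtain ⟨c, rfl⟩ := hs
        exact ⟨0, Fin.elim0, fun k => k.elim0, by simp [costOp_scalar p hp]⟩
      · exact absurd hcard (by have := one_lt_ncard_spectrum hn hA hs; omega)
    | succ m ih =>
      intro A hA hcard
      by_cases hs : ∃ c : ℝ, A = c • (1 : Matrix (Fin n) (Fin n) ℂ)
      · obtain ⟨c, rfl⟩ := hs
        exact ⟨0, Fin.elim0, fun k => k.elim0, by simp [costOp_scalar p hp]⟩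
      · obtain ⟨r, B, A', hB, hA', hlt, heq⟩ := h2 A hA hs
        obtain ⟨s, C, hC, hCeq⟩ := ih A' hA' (by omega)
        refine ⟨r + s, Fin.append B C, ?_, ?_⟩
        · intro k
          refine Fin.addCases (fun i => ?_) (fun i => ?_) k
          · rw [Fin.append_left]; exact hB i
          · rw [Fin.append_right]; exact hC i
        · have hA2 : costOp p A = ∑ k, costOp p' (B k) + costOp p A' := by
            rw [← heq]; abel
          rw [hA2, hCeq, Fin.sum_univ_add]
          congr 1
          · exact Finset.sum_congr rfl fun i _ => by rw [Fin.append_left]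
          · exact Finset.sum_congr rfl fun i _ => by rw [Fin.append_right]
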